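/- The function g(x) = -(1 + x^(1/p))^p for p > 0 is superquadratic on [0,∞), with witness C(x) = 0, i.e., g(y) - g(x) ≥ g(|y - x|) for all x, y ≥ 0. -/

import Mathlib

open Real Finset

private lemma rpow_subadd {r : ℝ} (hr0 : 0 ≤ r) (hr1 : r ≤ 1) {u v : ℝ}
    (hu : 0 ≤ u) (hv : 0 ≤ v) : (u + v) ^ r ≤ u ^ r + v ^ r := by
  lift u to NNReal using hu
  lift v to NNReal using hv
  have := NNReal.rpow_add_le_add_rpow u v hr0 hr1
  exact_mod_cast this

/-- Minkowski-based case: `q = 1/p ≥ 1`. -/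
private lemma mink (q : ℝ) (hq : 1 ≤ q) {x d : ℝ} (hx : 0 ≤ x) (hd : 0 ≤ d) :
    (1 + (x + d) ^ q) ^ (1 / q) ≤ (1 + x ^ q) ^ (1 / q) + (1 + d ^ q) ^ (1 / q) := by
  have hq0 : 0 < q := lt_of_lt_of_le one_pos hq
  have h := Real.Lp_add_le (Finset.univ : Finset (Fin 2)) ![1, x] ![0, d] hq
  simp only [Fin.sum_univ_two, Matrix.cons_val_zero, Matrix.cons_val_one, Matrix.head_cons,
    add_zero, zero_add] at h
  rw [abs_of_nonneg (by linarith : (0:ℝ) ≤ x + d),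
    abs_of_nonneg hx, abs_of_nonneg hd, abs_one, abs_zero, Real.one_rpow,
    Real.zero_rpow hq0.ne', zero_add] at h
  have h2 : (d ^ q) ^ (1/q) ≤ (1 + d ^ q) ^ (1/q) := by
    apply Real.rpow_le_rpow (by positivity) (by linarith [Real.rpow_nonneg hd q]) (by positivity)
  linarith
/-- Hölder-based case: `p > 1`. -/
private lemma hold {p : ℝ} (hp1 : 1 < p) {a b : ℝ} (ha : 0 ≤ a) (hb : 0 ≤ b) :
    (1 + (a ^ p + b ^ p) ^ (1/p)) ^ p ≤ (1 + a) ^ p + (1 + b) ^ p := by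
  have hp0 : 0 < p := lt_trans one_pos hp1
  -- dispose of the cases a = 0 or b = 0
  rcases eq_or_lt_of_le ha with rfl | ha'
  · rw [Real.zero_rpow hp0.ne', zero_add, one_div, Real.rpow_rpow_inv hb hp0.ne']
    have : (0:ℝ) < (1 + 0) ^ p := Real.rpow_pos_of_pos (by norm_num) p
    linarith
  rcases eq_or_lt_of_le hb with rfl | hb'
  · rw [Real.zero_rpow hp0.ne', add_zero, one_div, Real.rpow_rpow_inv ha hp0.ne']
    have : (0:ℝ) < (1 + 0) ^ p := Real.rpow_pos_of_pos (by norm_num) p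
    linarith
  -- now a, b > 0
  have hap : 0 < a ^ p := Real.rpow_pos_of_pos ha' p
  have hbp : 0 < b ^ p := Real.rpow_pos_of_pos hb' p
  set c : ℝ := (a ^ p + b ^ p) ^ (1/p) with hc
  have hcpos : 0 < c := Real.rpow_pos_of_pos (by linarith) _
  have hcp : c ^ p = a ^ p + b ^ p := by
    rw [hc, one_div, Real.rpow_inv_rpow (by positivity) hp0.ne']
  set q : ℝ := p / (p - 1) with hqdef
  have hpm1 : (0:ℝ) < p - 1 := by linarith
  have hpq : p.HolderConjugate q := (Real.holderConjugate_iff_eq_conjExponent hp1).2 hqdef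
  have hcpm1 : 0 < c ^ (p-1) := Real.rpow_pos_of_pos hcpos _
  have holder := Real.inner_le_Lp_mul_Lq (Finset.univ : Finset (Fin 2))
    ![1 + a, 1 + b] ![a ^ (p-1) / c ^ (p-1), b ^ (p-1) / c ^ (p-1)] hpq
  simp only [Fin.sum_univ_two, Matrix.cons_val_zero, Matrix.cons_val_one,
    Matrix.head_cons] at holder
  have hg1 : 0 ≤ a ^ (p-1) / c ^ (p-1) := by positivity
  have hg2 : 0 ≤ b ^ (p-1) / c ^ (p-1) := by positivity
  rw [abs_of_nonneg (by linarith : (0:ℝ) ≤ 1 + a), abs_of_nonneg (by linarith : (0:ℝ) ≤ 1 + b),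
    abs_of_nonneg hg1, abs_of_nonneg hg2] at holder
  -- the q-norm of the dual vector is 1
  have key : ∀ t : ℝ, 0 < t → (t ^ (p-1) / c ^ (p-1)) ^ q = t ^ p / c ^ p := by
    intro t ht
    rw [Real.div_rpow (Real.rpow_nonneg ht.le _) hcpm1.le, ← Real.rpow_mul ht.le,
      ← Real.rpow_mul hcpos.le, hpq.sub_one_mul_conj]
  rw [key a ha', key b hb', ← add_div, ← hcp, div_self (ne_of_gt (by positivity)),
    Real.one_rpow, mul_one] at holder
  -- lower bound for the inner product: 1 + c
  have hsplit : ∀ t : ℝ, 0 < t → t ^ p = t * t ^ (p-1) := by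
    intro t ht
    have h := Real.rpow_add ht 1 (p-1)
    rw [Real.rpow_one] at h
    rw [show (1:ℝ) + (p-1) = p by ring] at h
    exact h
  have hsub : c ^ (p-1) ≤ a ^ (p-1) + b ^ (p-1) := by
    have hr0 : 0 ≤ (p-1)/p := by positivity
    have hr1 : (p-1)/p ≤ 1 := by
      rw [div_le_one hp0]; linarith
    have h1 : c ^ (p-1) = (a ^ p + b ^ p) ^ ((p-1)/p) := by
      rw [hc, ← Real.rpow_mul (by positivity)]
      congr 1
      field_simp
    have h2 := rpow_subadd hr0 hr1 hap.le hbp.le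
    have h3 : (a ^ p) ^ ((p-1)/p) = a ^ (p-1) := by
      rw [← Real.rpow_mul ha'.le]
      congr 1
      field_simp
    have h4 : (b ^ p) ^ ((p-1)/p) = b ^ (p-1) := by
      rw [← Real.rpow_mul hb'.le]
      congr 1
      field_simp
    rw [h1]
    rw [h3, h4] at h2
    exact h2
  have hlow : 1 + c ≤ (1 + a) * (a ^ (p-1) / c ^ (p-1)) + (1 + b) * (b ^ (p-1) / c ^ (p-1)) := by
    have e1 : (1 + a) * (a ^ (p-1) / c ^ (p-1)) + (1 + b) * (b ^ (p-1) / c ^ (p-1))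
        = (a ^ (p-1) + b ^ (p-1)) / c ^ (p-1) + (a ^ p + b ^ p) / c ^ (p-1) := by
      rw [hsplit a ha', hsplit b hb']
      field_simp
      ring
    have e2 : (a ^ p + b ^ p) / c ^ (p-1) = c := by
      rw [← hcp, hsplit c hcpos]
      field_simp
    have e3 : (1:ℝ) ≤ (a ^ (p-1) + b ^ (p-1)) / c ^ (p-1) := (one_le_div hcpm1).mpr hsub
    rw [e1, e2]
    linarith
  -- combine
  have hfin : 1 + c ≤ ((1 + a) ^ p + (1 + b) ^ p) ^ (1/p) := le_trans hlow holder
  have := Real.rpow_le_rpow (by positivity) hfin hp0.le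
  rwa [one_div, Real.rpow_inv_rpow (by positivity) hp0.ne'] at this

private lemma keylem {p : ℝ} (hp : 0 < p) {x d : ℝ} (hx : 0 ≤ x) (hd : 0 ≤ d) :
    (1 + (x + d) ^ (1/p)) ^ p ≤ (1 + x ^ (1/p)) ^ p + (1 + d ^ (1/p)) ^ p := by
  rcases le_or_gt p 1 with h1 | h1
  · have hq : 1 ≤ 1/p := by
      rw [le_div_iff₀ hp]; linarith
    have := mink (1/p) hq hx hd
    rwa [one_div_one_div] at this
  · have := hold h1 (Real.rpow_nonneg hx (1/p)) (Real.rpow_nonneg hd (1/p))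
    simp only [one_div] at this ⊢
    rwa [Real.rpow_inv_rpow hx hp.ne', Real.rpow_inv_rpow hd hp.ne'] at this

theorem neg_one_add_rpow_superquadratic (p : ℝ) (hp : 0 < p) :
    ∀ x ≥ (0:ℝ), ∀ y ≥ (0:ℝ),
      (-(1 + y ^ (1 / p)) ^ p) - (-(1 + x ^ (1 / p)) ^ p) ≥
        -(1 + |y - x| ^ (1 / p)) ^ p := by
  intro x hx y hy
  rcases le_total x y with h | h
  · rw [abs_of_nonneg (by linarith)]
    have hkey := keylem hp hx (by linarith : (0:ℝ) ≤ y - x)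
    rw [show x + (y - x) = y by ring] at hkey
    linarith
  · rw [abs_of_nonpos (by linarith), neg_sub]
    have h1 : (1 + y ^ (1/p)) ^ p ≤ (1 + x ^ (1/p)) ^ p := by
      apply Real.rpow_le_rpow (by positivity) _ hp.le
      have := Real.rpow_le_rpow hy h (le_of_lt (by positivity : (0:ℝ) < 1/p))
      linarith
    have hxy : 0 ≤ (x - y) ^ (1/p) := Real.rpow_nonneg (by linarith) _
    have h2 : 0 ≤ (1 + (x - y) ^ (1/p)) ^ p := Real.rpow_nonneg (by linarith) _
    linarith
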